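/- arXiv:2302.05740 — 4 statements merged into one kernel-verified Lean document; each statement's English description precedes it below -/
import Mathlib

section
/- If β > 1, then the series ∑_{t=0}^∞ ∏_{k=0}^{t-1} (α+k)/(α+β+k) converges and its sum equals (α+β-1)/(β-1). -/
open Finset Filter Topology

/-- If β > 1, the Beta-weighted discounting is summable with sum (α+β-1)/(β-1). -/
theorem beta_discount_sum (α β : ℝ) (hα : 0 < α) (hβ : 1 < β) :
    HasSum (fun t : ℕ => ∏ k ∈ range t, (α + k) / (α + β + k))
      ((α + β - 1) / (β - 1)) := by
  set a : ℕ → ℝ := fun t => ∏ k ∈ range t, (α + k) / (α + β + k) with ha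
  set b : ℕ → ℝ := fun n => (α + β - 1 + n) / (β - 1) * a n with hb
  have hβ1 : (0:ℝ) < β - 1 := by linarith
  have hapos : ∀ n, 0 < a n := by
    intro n
    refine Finset.prod_pos ?_
    intro k _
    have : (0:ℝ) ≤ k := Nat.cast_nonneg k
    positivity
  have hbpos : ∀ n, 0 < b n := by
    intro n
    have h0 : (0:ℝ) ≤ n := Nat.cast_nonneg n
    have h2 := hapos n
    have h1 : (0:ℝ) < α + β - 1 + n := by linarith
    positivity
  have key : ∀ n, a n = b n - b (n+1) := by
    intro n
    have hP := hapos n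
    have hk : (0:ℝ) ≤ n := Nat.cast_nonneg n
    have hd : α + β + (n:ℝ) ≠ 0 := by positivity
    simp only [hb, ha, prod_range_succ]
    push_cast
    field_simp
    ring
  have hanti : Antitone b := antitone_nat_of_succ_le fun n => by
    have h1 := key n
    have h2 := hapos n
    linarith
  have hbdd : BddBelow (Set.range b) := ⟨0, by rintro x ⟨n, rfl⟩; exact (hbpos n).le⟩
  set L := ⨅ n, b n with hL
  have htend : Tendsto b atTop (𝓝 L) := tendsto_atTop_ciInf hanti hbdd
  have hLnn : 0 ≤ L := le_ciInf fun n => (hbpos n).le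
  have hLle : ∀ n, L ≤ b n := fun n => ciInf_le hbdd n
  have hsum : HasSum a (b 0 - L) := by
    rw [hasSum_iff_tendsto_nat_of_nonneg (fun n => (hapos n).le)]
    have heq : ∀ n, ∑ i ∈ range n, a i = b 0 - b n := by
      intro n
      rw [Finset.sum_congr rfl (fun i _ => key i), Finset.sum_range_sub']
    simp only [heq]
    exact tendsto_const_nhds.sub htend
  have hL0 : L = 0 := by
    by_contra h
    have hLpos : 0 < L := lt_of_le_of_ne hLnn (Ne.symm h)
    set K : ℝ := (β - 1) * L / (α + β) with hK
    have hKpos : 0 < K := by positivity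
    have hle : ∀ n : ℕ, K * (1 / n) ≤ a n := by
      intro n
      cases n with
      | zero => simp [hapos 0 |>.le]
      | succ m =>
        have hm : (1:ℝ) ≤ (m + 1 : ℕ) := by push_cast; linarith [Nat.cast_nonneg (α := ℝ) m]
        set n : ℕ := m + 1
        have hn0 : (0:ℝ) < n := by positivity
        have hden : (0:ℝ) < α + β - 1 + n := by linarith
        have han : a n = (β - 1)⁻¹ * (β-1) * a n := by
          field_simp
        have hbn : (β - 1) / (α + β - 1 + n) * b n = a n := by
          rw [hb]
          field_simp
        have hb_ge : (β - 1) / (α + β - 1 + n) * L ≤ a n := by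
          rw [← hbn]
          have := hLle n
          gcongr
        refine le_trans ?_ hb_ge
        rw [hK]
        rw [div_mul_eq_mul_div, div_mul_eq_mul_div, mul_one_div, div_div,
          div_le_div_iff₀ (by positivity) (by positivity)]
        have : (α + β - 1 + n) ≤ (α + β) * n := by
          have : (α + β - 1) * 1 ≤ (α + β - 1) * n := by
            apply mul_le_mul_of_nonneg_left hm (by linarith)
          nlinarith
        nlinarith [mul_le_mul_of_nonneg_left this (show (0:ℝ) ≤ (β-1)*L by positivity)]
    have hsummable : Summable (fun n : ℕ => K * (1 / n)) := by
      refine Summable.of_nonneg_of_le (fun n => by positivity) hle hsum.summable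
    have : Summable (fun n : ℕ => (1 : ℝ) / n) :=
      (summable_mul_left_iff (ne_of_gt hKpos)).mp hsummable
    exact Real.not_summable_one_div_natCast this
  have hb0 : b 0 = (α + β - 1) / (β - 1) := by
    simp [hb, ha]
  rw [hL0, hb0, sub_zero] at hsum
  exact hsum
end

section
/- If 0 < β ≤ 1 and α > 0, then the series ∑_{t=0}^∞ ∏_{k=0}^{t-1} (α+k)/(α+β+k) diverges to infinity. -/
open Finset Filter

lemma prod_telescope_aux (α : ℝ) (hα : 0 < α) (t : ℕ) :
    ∏ k ∈ range t, (α + k) / (α + 1 + k) = α / (α + t) := by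
  induction t with
  | zero => simp [div_self (ne_of_gt hα)]
  | succ n ih =>
    rw [Finset.prod_range_succ, ih]
    have h1 : α + (n : ℝ) ≠ 0 := by positivity
    have h2 : α + 1 + (n : ℝ) ≠ 0 := by positivity
    push_cast
    rw [div_mul_div_comm]
    rw [div_eq_div_iff (by positivity) (by positivity)]
    ring

/-- If 0 < β ≤ 1 and α > 0, the Beta-weighted discounting series diverges to infinity. -/
theorem beta_discount_divergent (α β : ℝ) (hα : 0 < α) (hβ0 : 0 < β) (hβ1 : β ≤ 1) :
    Tendsto (fun n : ℕ => ∑ t ∈ range n, ∏ k ∈ range t, (α + k) / (α + β + k))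
      atTop atTop := by
  set c : ℝ := min α 1 with hc
  have hcpos : 0 < c := lt_min hα one_pos
  have key : ∀ t : ℕ, c * (1 / (t + 1)) ≤ ∏ k ∈ range t, (α + k) / (α + β + k) := by
    intro t
    have h1 : ∏ k ∈ range t, (α + 1 + k : ℝ)⁻¹ * (α + k) ≤
        ∏ k ∈ range t, (α + β + k)⁻¹ * (α + k) := by
      apply Finset.prod_le_prod
      · intro k _
        positivity
      · intro k _
        have hk : (0:ℝ) ≤ k := Nat.cast_nonneg k
        have : α + β + (k:ℝ) ≤ α + 1 + k := by linarith
        have h1 : (0:ℝ) < α + β + k := by positivity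
        have h2 : (0:ℝ) ≤ α + k := by positivity
        exact mul_le_mul_of_nonneg_right (by gcongr) h2
    have h2 : ∏ k ∈ range t, (α + k) / (α + 1 + k) ≤
        ∏ k ∈ range t, (α + k) / (α + β + k) := by
      simpa [div_eq_inv_mul] using h1
    rw [prod_telescope_aux α hα t] at h2
    refine le_trans ?_ h2
    rw [hc]
    have ht1 : (0:ℝ) < (t:ℝ) + 1 := by positivity
    have ht2 : (0:ℝ) < α + t := by positivity
    rcases min_cases α 1 with ⟨hmin, hle⟩ | ⟨hmin, hle⟩
    · rw [hmin]
      rw [mul_one_div, div_le_div_iff₀ ht1 ht2]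
      nlinarith
    · rw [hmin]
      rw [mul_one_div, div_le_div_iff₀ ht1 ht2]
      nlinarith
  have hharm : Tendsto (fun n : ℕ => ∑ t ∈ range n, c * (1 / (t + 1 : ℝ)))
      atTop atTop := by
    simp_rw [← Finset.mul_sum]
    exact (Real.tendsto_sum_range_one_div_nat_succ_atTop).const_mul_atTop hcpos
  apply tendsto_atTop_mono _ hharm
  intro n
  exact Finset.sum_le_sum fun t _ => key t
end

section
/- Let λ ∈ [0,1) and γ ∈ [0,1), and define the k-step advantage A_t^{(k)} = -V(s_t) + ∑_{l=0}^{k-1} γ^l r_{t+l} + γ^k V(s_{t+k}) for bounded sequences of rewards r and values V. Then the λ-weighted combination (1-λ) ∑_{k=1}^∞ λ^{k-1} A_t^{(k)} equals ∑_{l=0}^∞ (γλ)^l δ_{t+l}, where δ_s = r_s + γ V(s_{s+1}) - V(s_s). -/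
open Finset

/-- The standard GAE identity: the λ-weighted combination of k-step advantages equals the
exponentially weighted sum of TD residuals. -/
theorem gae_identity (γ lam : ℝ) (hγ0 : 0 ≤ γ) (hγ1 : γ < 1)
    (hlam0 : 0 ≤ lam) (hlam1 : lam < 1)
    (r V : ℕ → ℝ) (hr : ∃ M, ∀ t, |r t| ≤ M) (hV : ∃ M, ∀ t, |V t| ≤ M) (t : ℕ) :
    (1 - lam) * ∑' k : ℕ, lam ^ k *
        (-V t + ∑ l ∈ range (k + 1), γ ^ l * r (t + l) + γ ^ (k + 1) * V (t + (k + 1))) =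
      ∑' l : ℕ, (γ * lam) ^ l * (r (t + l) + γ * V (t + l + 1) - V (t + l)) := by
  obtain ⟨Mr, hMr⟩ := hr
  obtain ⟨MV, hMV⟩ := hV
  set δ : ℕ → ℝ := fun l => r (t + l) + γ * V (t + l + 1) - V (t + l) with hδ
  set g : ℕ → ℝ := fun l => (γ * lam) ^ l * δ l with hg
  set f : ℕ → ℝ := fun j => lam ^ j with hf
  have hgl0 : 0 ≤ γ * lam := mul_nonneg hγ0 hlam0
  have hgl1 : γ * lam < 1 := by nlinarith
  -- summable norms
  have hsumf : Summable fun j => ‖f j‖ := by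
    simpa [hf, abs_of_nonneg (pow_nonneg hlam0 _)] using
      summable_geometric_of_lt_one hlam0 hlam1
  have hδbd : ∀ l, |δ l| ≤ Mr + MV + MV := by
    intro l
    have h1 := hMr (t + l)
    have h2 := hMV (t + l + 1)
    have h3 := hMV (t + l)
    have : |γ * V (t + l + 1)| ≤ MV := by
      rw [abs_mul]
      calc |γ| * |V (t + l + 1)| ≤ 1 * MV := by
            apply mul_le_mul (le_of_lt (by rwa [abs_of_nonneg hγ0])) h2 (abs_nonneg _)
            exact zero_le_one
        _ = MV := one_mul _
    calc |δ l| ≤ |r (t + l) + γ * V (t + l + 1)| + |V (t + l)| := abs_sub _ _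
      _ ≤ |r (t + l)| + |γ * V (t + l + 1)| + |V (t + l)| := by
          gcongr; exact abs_add_le _ _
      _ ≤ Mr + MV + MV := by gcongr
  have hsumg : Summable fun l => ‖g l‖ := by
    have hb : ∀ l, ‖g l‖ ≤ (γ * lam) ^ l * (Mr + MV + MV) := by
      intro l
      rw [hg]
      simp only [Real.norm_eq_abs, abs_mul, abs_pow, abs_of_nonneg hgl0]
      exact mul_le_mul_of_nonneg_left (hδbd l) (pow_nonneg hgl0 _)
    exact Summable.of_nonneg_of_le (fun l => norm_nonneg _) hb
      ((summable_geometric_of_lt_one hgl0 hgl1).mul_right _)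
  -- per-term identity
  have hterm : ∀ k : ℕ, lam ^ k *
      (-V t + ∑ l ∈ range (k + 1), γ ^ l * r (t + l) + γ ^ (k + 1) * V (t + (k + 1))) =
      ∑ l ∈ range (k + 1), g l * f (k - l) := by
    intro k
    have htel : ∑ l ∈ range (k + 1), (γ ^ (l + 1) * V (t + (l + 1)) - γ ^ l * V (t + l)) =
        γ ^ (k + 1) * V (t + (k + 1)) - γ ^ 0 * V (t + 0) :=
      Finset.sum_range_sub (fun l => γ ^ l * V (t + l)) (k + 1)
    have hA : -V t + ∑ l ∈ range (k + 1), γ ^ l * r (t + l) + γ ^ (k + 1) * V (t + (k + 1)) =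
        ∑ l ∈ range (k + 1), γ ^ l * δ l := by
      rw [hδ]
      have hx : ∀ x : ℕ, γ ^ x * (r (t + x) + γ * V (t + x + 1) - V (t + x)) =
          γ ^ x * r (t + x) + (γ ^ (x + 1) * V (t + (x + 1)) - γ ^ x * V (t + x)) := by
        intro x
        have : t + x + 1 = t + (x + 1) := by omega
        rw [this]; ring
      simp_rw [hx]
      rw [Finset.sum_add_distrib, htel]
      simp
      ring
    rw [hA, Finset.mul_sum]
    apply Finset.sum_congr rfl
    intro l hl
    rw [Finset.mem_range] at hl
    have hlk : l ≤ k := Nat.lt_succ_iff.mp hl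
    simp only [hg, hf, hδ]
    rw [show lam ^ k = lam ^ l * lam ^ (k - l) by rw [← pow_add, Nat.add_sub_cancel' hlk],
      mul_pow]
    ring
  rw [tsum_congr hterm, ← tsum_mul_tsum_eq_tsum_sum_range_of_summable_norm hsumg hsumf]
  have : ∑' j, f j = (1 - lam)⁻¹ := tsum_geometric_of_lt_one hlam0 hlam1
  rw [this]
  have h1 : (1 : ℝ) - lam ≠ 0 := by linarith
  field_simp
end

section
/- Let λ ∈ [0,1), let Γ : ℕ → [0,1] be an arbitrary discounting with Γ(0) = 1, and let r, V : ℕ → ℝ be bounded. Define the k-step advantage Ã_t^{(k)} = -V(t) + ∑_{l=0}^{k-1} Γ(l) r(t+l) + Γ(k) V(t+k). Then (1-λ) ∑_{k=1}^∞ λ^{k-1} Ã_t^{(k)} = -V(t) + ∑_{l=0}^∞ λ^l Γ(l) r(t+l) + (1-λ) ∑_{l=0}^∞ λ^l Γ(l+1) V(t+l+1), and all series involved converge absolutely. -/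
open Finset

/-- The UGAE identity: GAE with an arbitrary discounting Γ bounded in [0,1], with
absolute convergence of all series involved. -/
theorem ugae_identity (lam : ℝ) (hlam0 : 0 ≤ lam) (hlam1 : lam < 1)
    (Γ : ℕ → ℝ) (hΓ : ∀ t, Γ t ∈ Set.Icc (0 : ℝ) 1) (hΓ0 : Γ 0 = 1)
    (r V : ℕ → ℝ) (hr : ∃ M, ∀ t, |r t| ≤ M) (hV : ∃ M, ∀ t, |V t| ≤ M) (t : ℕ) :
    Summable (fun k : ℕ => |lam ^ k *
        (-V t + ∑ l ∈ range (k + 1), Γ l * r (t + l) + Γ (k + 1) * V (t + (k + 1)))|) ∧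
    Summable (fun l : ℕ => |lam ^ l * Γ l * r (t + l)|) ∧
    Summable (fun l : ℕ => |lam ^ l * Γ (l + 1) * V (t + l + 1)|) ∧
    (1 - lam) * ∑' k : ℕ, lam ^ k *
        (-V t + ∑ l ∈ range (k + 1), Γ l * r (t + l) + Γ (k + 1) * V (t + (k + 1))) =
      -V t + (∑' l : ℕ, lam ^ l * Γ l * r (t + l)) +
        (1 - lam) * ∑' l : ℕ, lam ^ l * Γ (l + 1) * V (t + l + 1) := by
  obtain ⟨Mr, hMr⟩ := hr
  obtain ⟨Mv, hMv⟩ := hV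
  have hΓabs : ∀ l, |Γ l| ≤ 1 := fun l =>
    abs_le.mpr ⟨by linarith [(hΓ l).1], (hΓ l).2⟩
  have hlpow : ∀ k : ℕ, |lam ^ k| = lam ^ k := fun k => abs_of_nonneg (pow_nonneg hlam0 k)
  have hgeo : Summable (fun k : ℕ => lam ^ k) := summable_geometric_of_lt_one hlam0 hlam1
  have hgeonorm : Summable (fun k : ℕ => ‖lam ^ k‖) := by
    simpa [Real.norm_eq_abs, hlpow] using hgeo
  set b : ℕ → ℝ := fun l => lam ^ l * Γ l * r (t + l) with hbdef
  set w : ℕ → ℝ := fun l => lam ^ l * Γ (l + 1) * V (t + l + 1) with hwdef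
  -- summability of b and w in norm
  have hbnorm : Summable (fun l => ‖b l‖) := by
    apply Summable.of_nonneg_of_le (fun l => norm_nonneg _) ?_ (hgeo.mul_right Mr)
    intro l
    have : ‖b l‖ = |lam ^ l| * |Γ l| * |r (t + l)| := by
      simp [hbdef, Real.norm_eq_abs, abs_mul]
    rw [this, hlpow]
    calc lam ^ l * |Γ l| * |r (t + l)| ≤ lam ^ l * 1 * Mr := by
          apply mul_le_mul ?_ (hMr _) (abs_nonneg _) (by positivity)
          exact mul_le_mul_of_nonneg_left (hΓabs l) (pow_nonneg hlam0 l)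
      _ = lam ^ l * Mr := by ring
  have hwnorm : Summable (fun l => ‖w l‖) := by
    apply Summable.of_nonneg_of_le (fun l => norm_nonneg _) ?_ (hgeo.mul_right Mv)
    intro l
    have : ‖w l‖ = |lam ^ l| * |Γ (l + 1)| * |V (t + l + 1)| := by
      simp [hwdef, Real.norm_eq_abs, abs_mul]
    rw [this, hlpow]
    calc lam ^ l * |Γ (l + 1)| * |V (t + l + 1)| ≤ lam ^ l * 1 * Mv := by
          apply mul_le_mul ?_ (hMv _) (abs_nonneg _) (by positivity)
          exact mul_le_mul_of_nonneg_left (hΓabs _) (pow_nonneg hlam0 l)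
      _ = lam ^ l * Mv := by ring
  -- the Cauchy product: ∑ λ^k S_k
  set S : ℕ → ℝ := fun k => ∑ l ∈ range (k + 1), Γ l * r (t + l) with hSdef
  have hkey : ∀ n : ℕ, ∑ l ∈ range (n + 1), b l * lam ^ (n - l) = lam ^ n * S n := by
    intro n
    rw [hSdef, Finset.mul_sum]
    apply Finset.sum_congr rfl
    intro l hl
    have hln : l ≤ n := Nat.lt_succ_iff.mp (Finset.mem_range.mp hl)
    have : lam ^ l * lam ^ (n - l) = lam ^ n := by
      rw [← pow_add, Nat.add_sub_cancel' hln]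
    simp only [hbdef]
    calc lam ^ l * Γ l * r (t + l) * lam ^ (n - l)
        = (lam ^ l * lam ^ (n - l)) * (Γ l * r (t + l)) := by ring
      _ = lam ^ n * (Γ l * r (t + l)) := by rw [this]
  have hconvn : Summable (fun n => ‖∑ l ∈ range (n + 1), b l * lam ^ (n - l)‖) :=
    summable_norm_sum_mul_range_of_summable_norm hbnorm hgeonorm
  have hf2norm : Summable (fun n => ‖lam ^ n * S n‖) := by
    apply hconvn.congr; intro n; rw [hkey n]
  have hcauchy : (∑' n, b n) * (∑' n, lam ^ n) = ∑' n, lam ^ n * S n := by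
    rw [tsum_mul_tsum_eq_tsum_sum_range_of_summable_norm hbnorm hgeonorm]
    exact tsum_congr hkey
  -- summability of the three pieces
  have hf1 : Summable (fun k : ℕ => lam ^ k * (-V t)) := hgeo.mul_right _
  have hf2 : Summable (fun n => lam ^ n * S n) := hf2norm.of_norm
  have hf3 : Summable w := hwnorm.of_norm
  -- the A series
  have hAeq : ∀ k : ℕ,
      lam ^ k * (-V t + S k + Γ (k + 1) * V (t + (k + 1)))
        = lam ^ k * (-V t) + lam ^ k * S k + w k := by
    intro k
    have : t + (k + 1) = t + k + 1 := by omega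
    simp only [hwdef, this]; ring
  have hAnorm : Summable (fun k : ℕ =>
      |lam ^ k * (-V t + S k + Γ (k + 1) * V (t + (k + 1)))|) := by
    have hsum : Summable (fun k : ℕ =>
        |lam ^ k * (-V t)| + ‖lam ^ k * S k‖ + ‖w k‖) :=
      ((hf1.abs.add hf2norm).add hwnorm)
    apply Summable.of_nonneg_of_le (fun k => abs_nonneg _) ?_ hsum
    intro k
    rw [hAeq k]
    calc |lam ^ k * (-V t) + lam ^ k * S k + w k|
        ≤ |lam ^ k * (-V t) + lam ^ k * S k| + |w k| := abs_add_le _ _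
      _ ≤ |lam ^ k * (-V t)| + |lam ^ k * S k| + |w k| := by
          gcongr; exact abs_add_le _ _
      _ = |lam ^ k * (-V t)| + ‖lam ^ k * S k‖ + ‖w k‖ := by
          simp only [Real.norm_eq_abs]
  have hA : Summable (fun k : ℕ =>
      lam ^ k * (-V t + S k + Γ (k + 1) * V (t + (k + 1)))) := by
    apply Summable.of_abs hAnorm
  refine ⟨hAnorm, by simpa only [Real.norm_eq_abs] using hbnorm, by simpa only [Real.norm_eq_abs] using hwnorm, ?_⟩
  -- main computation
  have h1lam : (1 : ℝ) - lam ≠ 0 := by linarith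
  have hgeosum : ∑' n : ℕ, lam ^ n = (1 - lam)⁻¹ := tsum_geometric_of_lt_one hlam0 hlam1
  have hsplit : ∑' k : ℕ, lam ^ k * (-V t + S k + Γ (k + 1) * V (t + (k + 1)))
      = (∑' k : ℕ, lam ^ k * (-V t)) + (∑' k, lam ^ k * S k) + ∑' k, w k := by
    rw [tsum_congr hAeq, Summable.tsum_add (hf1.add hf2) hf3, Summable.tsum_add hf1 hf2]
  have hT1 : ∑' k : ℕ, lam ^ k * (-V t) = (1 - lam)⁻¹ * (-V t) := by
    rw [tsum_mul_right, hgeosum]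
  have hT2 : ∑' k : ℕ, lam ^ k * S k = (∑' n, b n) * (1 - lam)⁻¹ := by
    rw [← hcauchy, hgeosum]
  rw [hsplit, hT1, hT2]
  have hinv : (1 - lam) * (1 - lam)⁻¹ = 1 := mul_inv_cancel₀ h1lam
  calc (1 - lam) * ((1 - lam)⁻¹ * (-V t) + (∑' n, b n) * (1 - lam)⁻¹ + ∑' k, w k)
      = ((1 - lam) * (1 - lam)⁻¹) * (-V t) + ((1 - lam) * (1 - lam)⁻¹) * (∑' n, b n)
        + (1 - lam) * ∑' k, w k := by ring
    _ = -V t + (∑' n, b n) + (1 - lam) * ∑' k, w k := by rw [hinv]; ring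
end
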